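/- Let Z be an integrable real-valued random variable on a probability space, α ∈ (0,1), λ ≥ 0, ν ∈ ℝ, and q ∈ [0,1]. Define g = λ − (λ/(1−α))·(P(Z > ν) + q·P(Z = ν)). Then g is a subgradient at ν of the convex function f(ν') = λ·(ν' + (1−α)⁻¹·E[(Z − ν')⁺]); that is, for every ν' ∈ ℝ, f(ν') ≥ f(ν) + g·(ν' − ν). -/

import Mathlib

open MeasureTheory

lemma pointwise_sub (q ν ν' z : ℝ) (hq : q ∈ Set.Icc (0 : ℝ) 1) :
    max (z - ν) 0 ≤ max (z - ν') 0 +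
      ((if ν < z then (1:ℝ) else 0) + q * (if z = ν then 1 else 0)) * (ν' - ν) := by
  have h1 : z - ν' ≤ max (z - ν') 0 := le_max_left _ _
  have h2 : (0:ℝ) ≤ max (z - ν') 0 := le_max_right _ _
  rcases lt_trichotomy z ν with h | h | h
  · have : max (z - ν) 0 = 0 := max_eq_right (by linarith)
    rw [this]
    simp only [if_neg (by linarith : ¬ ν < z), if_neg (by exact ne_of_lt h)]
    linarith
  · have : max (z - ν) 0 = 0 := max_eq_right (by linarith)
    rw [this]
    simp only [if_neg (by linarith : ¬ ν < z), if_pos h]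
    rcases le_total ν' z with h3 | h3
    · nlinarith [hq.1, hq.2]
    · nlinarith [hq.1, hq.2]
  · have : max (z - ν) 0 = z - ν := max_eq_left (by linarith)
    rw [this]
    simp only [if_pos h, if_neg (by exact ne_of_gt h)]
    linarith

/-- For an integrable random variable `Z`, confidence level `α ∈ (0,1)`,
`λ ≥ 0`, `ν ∈ ℝ` and `q ∈ [0,1]`, the quantity
`g = λ − (λ/(1−α))·(P(Z > ν) + q·P(Z = ν))` is a subgradient at `ν` of the convex
function `ν' ↦ λ·(ν' + (1−α)⁻¹·E[(Z − ν')⁺])`. -/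
theorem stmt1 {Ω : Type*} [MeasurableSpace Ω] (P : Measure Ω) [IsProbabilityMeasure P]
    (Z : Ω → ℝ) (hZ : Integrable Z P) (α : ℝ) (hα : α ∈ Set.Ioo (0 : ℝ) 1)
    (lam : ℝ) (hlam : 0 ≤ lam) (ν q : ℝ) (hq : q ∈ Set.Icc (0 : ℝ) 1) :
    ∀ ν' : ℝ,
      lam * (ν' + (1 - α)⁻¹ * ∫ ω, max (Z ω - ν') 0 ∂P) ≥
        lam * (ν + (1 - α)⁻¹ * ∫ ω, max (Z ω - ν) 0 ∂P) +
          (lam - lam / (1 - α) *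
              ((P {ω | Z ω > ν}).toReal + q * (P {ω | Z ω = ν}).toReal)) * (ν' - ν) := by
  intro ν'
  obtain ⟨hα0, hα1⟩ := hα
  have h1α : (0:ℝ) < 1 - α := by linarith
  -- measurable modification
  set Z' := hZ.1.mk Z with hZ'def
  have hmeas : StronglyMeasurable Z' := hZ.1.stronglyMeasurable_mk
  have hae : Z =ᵐ[P] Z' := hZ.1.ae_eq_mk
  have hZ' : Integrable Z' P := hZ.congr hae
  -- sets
  have hsgt : MeasurableSet {ω | ν < Z' ω} :=
    measurableSet_lt measurable_const hmeas.measurable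
  have hseq : MeasurableSet {ω | Z' ω = ν} :=
    (hmeas.measurable (measurableSet_singleton ν))
  have hPgt : P {ω | Z ω > ν} = P {ω | ν < Z' ω} := by
    apply measure_congr
    filter_upwards [hae] with ω hω
    show (ν < Z ω) = (ν < Z' ω)
    rw [hω]
  have hPeq : P {ω | Z ω = ν} = P {ω | Z' ω = ν} := by
    apply measure_congr
    filter_upwards [hae] with ω hω
    show (Z ω = ν) = (Z' ω = ν)
    rw [hω]
  -- integrals with Z'
  have hint : ∀ t : ℝ, Integrable (fun ω => max (Z' ω - t) 0) P := fun t =>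
    (hZ'.sub (integrable_const t)).pos_part
  have hintZ : ∀ t : ℝ, (∫ ω, max (Z ω - t) 0 ∂P) = ∫ ω, max (Z' ω - t) 0 ∂P := by
    intro t
    apply integral_congr_ae
    filter_upwards [hae] with ω hω
    rw [hω]
  -- the indicator-type function
  set F : Ω → ℝ := fun ω => (if ν < Z' ω then (1:ℝ) else 0) + q * (if Z' ω = ν then 1 else 0)
    with hF
  have hind1 : Integrable (fun ω => if ν < Z' ω then (1:ℝ) else 0) P := by
    have := (integrable_const (1:ℝ) : Integrable _ P).indicator hsgt
    refine this.congr ?_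
    filter_upwards with ω
    simp [Set.indicator_apply]
  have hind2 : Integrable (fun ω => if Z' ω = ν then (1:ℝ) else 0) P := by
    have := (integrable_const (1:ℝ) : Integrable _ P).indicator hseq
    refine this.congr ?_
    filter_upwards with ω
    simp [Set.indicator_apply]
  have hFint : Integrable F P := hind1.add (hind2.const_mul q)
  have hint1 : (∫ ω, (if ν < Z' ω then (1:ℝ) else 0) ∂P) = (P {ω | ν < Z' ω}).toReal := by
    rw [show (fun ω => if ν < Z' ω then (1:ℝ) else 0)
        = Set.indicator {ω | ν < Z' ω} (fun _ => 1) from by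
      funext ω; simp [Set.indicator_apply]]
    rw [integral_indicator hsgt]
    simp
    rfl
  have hint2 : (∫ ω, (if Z' ω = ν then (1:ℝ) else 0) ∂P) = (P {ω | Z' ω = ν}).toReal := by
    rw [show (fun ω => if Z' ω = ν then (1:ℝ) else 0)
        = Set.indicator {ω | Z' ω = ν} (fun _ => 1) from by
      funext ω; simp [Set.indicator_apply]]
    rw [integral_indicator hseq]
    simp
    rfl
  have hFval : (∫ ω, F ω ∂P)
      = (P {ω | Z ω > ν}).toReal + q * (P {ω | Z ω = ν}).toReal := by
    rw [hF, integral_add hind1 (hind2.const_mul q), integral_const_mul, hint1, hint2,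
      hPgt, hPeq]
  -- key integral inequality
  have hkey : (∫ ω, max (Z' ω - ν) 0 ∂P)
      ≤ (∫ ω, max (Z' ω - ν') 0 ∂P) + (∫ ω, F ω ∂P) * (ν' - ν) := by
    have hmono : (∫ ω, max (Z' ω - ν) 0 ∂P)
        ≤ ∫ ω, (max (Z' ω - ν') 0 + F ω * (ν' - ν)) ∂P := by
      apply integral_mono (hint ν) ((hint ν').add (hFint.mul_const _))
      intro ω
      exact pointwise_sub q ν ν' (Z' ω) hq
    rwa [integral_add (hint ν') (hFint.mul_const _), integral_mul_const] at hmono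
  -- conclude
  rw [hintZ ν, hintZ ν', ge_iff_le]
  have hc : lam / (1 - α) = lam * (1 - α)⁻¹ := div_eq_mul_inv _ _
  rw [hc]
  have hnn : (0:ℝ) ≤ lam * (1 - α)⁻¹ := mul_nonneg hlam (by positivity)
  have hmul := mul_le_mul_of_nonneg_left hkey hnn
  rw [← hFval]
  nlinarith [hmul]
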